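/- For all integers n ≥ 2, all integers j ≥ 1, and all integers k with 1 ≤ k ≤ ⌊(n-1)/2⌋, we have ⌊(n-2)/(2j)⌋ ≤ ⌊(k-1)/(2j) + 1/2⌋ + ⌊(n-k-2)/(2j) + 1/2⌋. -/

import Mathlib

lemma floor_int_div_q (a b : ℤ) (hb : 0 < b) : ⌊(a : ℚ) / (b : ℚ)⌋ = a / b := by
  obtain ⟨d, rfl⟩ : ∃ d : ℕ, (d : ℤ) = b := ⟨b.toNat, Int.toNat_of_nonneg hb.le⟩
  rw [show ((d : ℤ) : ℚ) = (d : ℚ) by push_cast; ring]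
  exact Rat.floor_intCast_div_natCast a d

theorem floor_le_round_sum (n j k : ℤ) (hn : 2 ≤ n) (hj : 1 ≤ j)
    (hk : 1 ≤ k) (hk' : k ≤ (n - 1) / 2) :
    ⌊((n : ℚ) - 2) / (2 * j)⌋ ≤
      ⌊((k : ℚ) - 1) / (2 * j) + 1 / 2⌋ + ⌊((n : ℚ) - k - 2) / (2 * j) + 1 / 2⌋ := by
  have hd : (0 : ℤ) < 2 * j := by omega
  have hdq : ((2 * j : ℤ) : ℚ) ≠ 0 := by
    exact_mod_cast hd.ne'
  have e1 : ((n : ℚ) - 2) / (2 * j) = ((n - 2 : ℤ) : ℚ) / ((2 * j : ℤ) : ℚ) := by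
    push_cast; ring
  have e2 : ((k : ℚ) - 1) / (2 * j) + 1 / 2 = ((k - 1 + j : ℤ) : ℚ) / ((2 * j : ℤ) : ℚ) := by
    field_simp
    push_cast
    ring
  have e3 : ((n : ℚ) - k - 2) / (2 * j) + 1 / 2
      = ((n - k - 2 + j : ℤ) : ℚ) / ((2 * j : ℤ) : ℚ) := by
    field_simp
    push_cast
    ring
  rw [e1, e2, e3, floor_int_div_q _ _ hd, floor_int_div_q _ _ hd, floor_int_div_q _ _ hd]
  set d := 2 * j with hdd
  set q1 := (k - 1 + j) / d with hq1
  set q2 := (n - k - 2 + j) / d with hq2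
  have h1 : k - 1 + j < (q1 + 1) * d := Int.lt_ediv_add_one_mul_self _ hd
  have h2 : n - k - 2 + j < (q2 + 1) * d := Int.lt_ediv_add_one_mul_self _ hd
  have h3 : (n - 2) / d < q1 + q2 + 1 := by
    rw [Int.ediv_lt_iff_lt_mul hd]
    nlinarith
  omega
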